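/- The lattice N(D_4^6) — generated by the vectors (x_1,…,x_24) ∈ ℤ²⁴ with ∑_{i=1+4j}^{4+4j} x_i ≡ 0 mod 2 for j = 0,…,5, together with the six explicit glue vectors built from s = (1/2)(1,1,1,1), v = (0,0,0,1), c = s − v — is an even unimodular lattice of rank 24 with respect to the standard inner product on ℝ²⁴. -/

import Mathlib

/-- `s = (1/2)(1,1,1,1)`. -/
noncomputable def sD4 : Fin 4 → ℝ := ![1/2, 1/2, 1/2, 1/2]

/-- `v = (0,0,0,1)`. -/
noncomputable def vD4 : Fin 4 → ℝ := ![0, 0, 0, 1]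

/-- `c = s - v`. -/
noncomputable def cD4 : Fin 4 → ℝ := sD4 - vD4

/-- The Niemeier lattice `N(D₄⁶)` in `ℝ²⁴ = (ℝ⁴)⁶`: the ℤ-span of the integer vectors
whose six blocks of four coordinates each have even sum, together with the six glue
vectors `(v,c,c,v,c,v)`, `(c,v,v,c,c,v)`, `(c,v,c,v,v,c)`, `(s,0,c,v,0,s)`,
`(0,0,c,c,c,c)`, `(v,0,c,s,v,0)`. -/
def ND4 : Submodule ℤ (Fin 6 × Fin 4 → ℝ) :=
  Submodule.span ℤ
    ({x : Fin 6 × Fin 4 → ℝ | (∀ p, ∃ m : ℤ, x p = (m : ℝ)) ∧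
        ∀ j : Fin 6, ∃ m : ℤ, ∑ i : Fin 4, x (j, i) = 2 * (m : ℝ)} ∪
      {fun p => ![vD4, cD4, cD4, vD4, cD4, vD4] p.1 p.2,
       fun p => ![cD4, vD4, vD4, cD4, cD4, vD4] p.1 p.2,
       fun p => ![cD4, vD4, cD4, vD4, vD4, cD4] p.1 p.2,
       fun p => ![sD4, 0, cD4, vD4, 0, sD4] p.1 p.2,
       fun p => ![0, 0, cD4, cD4, cD4, cD4] p.1 p.2,
       fun p => ![vD4, 0, cD4, sD4, vD4, 0] p.1 p.2})

def Q2L : List (List Int) := [[0, 2, -2, 0, 0, 0, 0, 0, 0, 0, 0, 0, 0, 0, 0, 0, 0, 0, 0, 0, 0, 0, 0, 0], [0, 0, 2, -2, 0, 0, 0, 0, 0, 0, 0, 0, 0, 0, 0, 0, 0, 0, 0, 0, 0, 0, 0, 0], [0, 0, 2, 2, 0, 0, 0, 0, 0, 0, 0, 0, 0, 0, 0, 0, 0, 0, 0, 0, 0, 0, 0, 0], [0, 0, 0, 0, 0, 2, -2, 0, 0, 0, 0, 0, 0, 0, 0, 0, 0, 0, 0, 0, 0, 0, 0, 0], [0,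 0, 0, 0, 0, 0, 2, -2, 0, 0, 0, 0, 0, 0, 0, 0, 0, 0, 0, 0, 0, 0, 0, 0], [0, 0, 0, 0, 0, 0, 2, 2, 0, 0, 0, 0, 0, 0, 0, 0, 0, 0, 0, 0, 0, 0, 0, 0], [0, 0, 0, 0, 0, 0, 0, 0, 0, 2, -2, 0, 0, 0, 0, 0, 0, 0, 0, 0, 0, 0, 0, 0], [0, 0, 0, 0, 0, 0, 0, 0, 0, 0, 2, -2, 0, 0, 0, 0, 0, 0, 0, 0, 0, 0, 0, 0], [0, 0, 0, 0, 0, 0, 0, 0, 0, 0, 2, 2, 0, 0, 0, 0, 0, 0, 0, 0, 0, 0, 0, 0], [0, 0, 0, 0, 0, 0, 0, 0, 0, 0, 0, 0, 2, -2, 0, 0, 0, 0, 0, 0, 0, 0, 0, 0], [0, 0, 0, 0, 0, 0, 0, 0, 0, 0, 0, 0, 0, 2, -2, 0, 0, 0, 0, 0, 0, 0, 0, 0], [0, 0, 0, 0, 0, 0, 0, 0, 0, 0, 0, 0, 0, 0, 2, -2, 0, 0, 0, 0, 0, 0, 0, 0], [0, 0, 0, 0, 0, 0, 0, 0, 0,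 0, 0, 0, 0, 0, 0, 0, 2, -2, 0, 0, 0, 0, 0, 0], [0, 0, 0, 0, 0, 0, 0, 0, 0, 0, 0, 0, 0, 0, 0, 0, 0, 2, -2, 0, 0, 0, 0, 0], [0, 0, 0, 0, 0, 0, 0, 0, 0, 0, 0, 0, 0, 0, 0, 0, 0, 0, 2, 2, 0, 0, 0, 0], [0, 0, 0, 0, 0, 0, 0, 0, 0, 0, 0, 0, 0, 0, 0, 0, 0, 0, 0, 0, 0, 2, -2, 0], [0, 0, 0, 0, 0, 0, 0, 0, 0, 0, 0, 0, 0, 0, 0, 0, 0, 0, 0, 0, 0, 0, 2, -2], [0, 0, 0, 0, 0, 0, 0, 0, 0, 0, 0, 0, 0, 0, 0, 0, 0, 0, 0, 0, 0, 0, 2, 2], [0, 0, 0, 2, 1, 1, 1, -1, 1, 1, 1, -1, 0, 0, 0, 2, 1, 1, 1, -1, 0, 0, 0, 2], [1, 1, 1, -1, 0, 0, 0, 2, 0, 0, 0, 2, 1, 1, 1, -1, 1, 1, 1, -1, 0, 0, 0, 2], [1, 1, 1, -1, 0, 0, 0, 2, 1, 1, 1, -1, 0, 0, 0, 2, 0,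 0, 0, 2, 1, 1, 1, -1], [1, 1, 1, 1, 0, 0, 0, 0, 1, 1, 1, -1, 0, 0, 0, 2, 0, 0, 0, 0, 1, 1, 1, 1], [0, 0, 0, 0, 0, 0, 0, 0, 1, 1, 1, -1, 1, 1, 1, -1, 1, 1, 1, -1, 1, 1, 1, -1], [0, 0, 0, 2, 0, 0, 0, 0, 1, 1, 1, -1, 1, 1, 1, 1, 0, 0, 0, 2, 0, 0, 0, 0]]

def A2L : List (List Int) := [[-2, 3, -7, 0, -4, 4, 0, 0, 0, 2, 4, 6, 2, 4, 6, 0, 6, -6, 0, 0, -8, 12, -4, 0], [2, 1, 1, 0, 0, 0, 0, 0, 0, 0, 0, 0, 0, 0, 0, 0, 0, 0, 0, 0, 0, 0, 0, 0], [0, 1, 1, 0, 0, 0, 0, 0, 0, 0, 0, 0, 0, 0, 0, 0, 0, 0, 0, 0, 0, 0, 0, 0], [0, -1, 1, 0, 0, 0, 0, 0, 0, 0, 0, 0, 0, 0, 0, 0, 0, 0, 0, 0, 0, 0, 0, 0], [0, -16, 16, -2, 13, -17, 0, 2, -2, -2, -4, -6, -6, -12, -18, 0, -12, 12, 4, 4,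 28, -32, 4, -4], [0, 0, 0, 2, 1, 1, 0, 0, 0, 0, 0, 0, 0, 0, 0, 0, 0, 0, 0, 0, 0, 0, 0, 0], [0, 0, 0, 0, 1, 1, 0, 0, 0, 0, 0, 0, 0, 0, 0, 0, 0, 0, 0, 0, 0, 0, 0, 0], [0, 0, 0, 0, -1, 1, 0, 0, 0, 0, 0, 0, 0, 0, 0, 0, 0, 0, 0, 0, 0, 0, 0, 0], [0, 24, -24, 0, -22, 22, -2, -7, 3, 6, 12, 18, 8, 16, 24, 0, 18, -18, 0, -8, -36, 44, -8, 4], [0, 0, 0, 0, 0, 0, 2, 1, 1, 0, 0, 0, 0, 0, 0, 0, 0, 0, 0, 0, 0, 0, 0, 0], [0, 0, 0, 0, 0, 0, 0, 1, 1, 0, 0, 0, 0, 0, 0, 0, 0, 0, 0, 0, 0, 0, 0, 0], [0, 0, 0, 0, 0, 0, 0, -1, 1, 0, 0, 0, 0, 0, 0, 0, 0, 0, 0, 0, 0, 0, 0, 0], [0, -5, 5, 0, 5, -5, 0, 1, -1, 0, -2, -4, -2, -4, -6, 0, -4, 4, 0, 2, 8, -10, 2, 0], [0, -5, 5, 0,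 5, -5, 0, 1, -1, -2, -2, -4, -2, -4, -6, 0, -4, 4, 0, 2, 8, -10, 2, 0], [0, -5, 5, 0, 5, -5, 0, 1, -1, -2, -4, -4, -2, -4, -6, 0, -4, 4, 0, 2, 8, -10, 2, 0], [0, -5, 5, 0, 5, -5, 0, 1, -1, -2, -4, -6, -2, -4, -6, 0, -4, 4, 0, 2, 8, -10, 2, 0], [0, 1, -1, 0, -1, 1, 0, 0, 0, 0, 0, 0, 2, 2, 2, 0, 1, -1, 0, 0, -2, 2, 0, 0], [0, 1, -1, 0, -1, 1, 0, 0, 0, 0, 0, 0, 0, 2, 2, 0, 1, -1, 0, 0, -2, 2, 0, 0], [0, 1, -1, 0, -1, 1, 0, 0, 0, 0, 0, 0, 0, 0, 2, 0, 1, -1, 0, 0, -2, 2, 0, 0], [0, -1, 1, 0, 1, -1, 0, 0, 0, 0, 0, 0, 0, 0, 0, 0, -1, 1, 0, 0, 2, -2, 0, 0], [0, -18, 18, 0, 16, -16, 0, 2, -2, -4, -8, -12, -6, -12, -18, -2, -17, 13, 0, 4, 28, -32, 8, -4], [0, 0, 0, 0, 0, 0, 0, 0, 0, 0, 0, 0,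 0, 0, 0, 2, 1, 1, 0, 0, 0, 0, 0, 0], [0, 0, 0, 0, 0, 0, 0, 0, 0, 0, 0, 0, 0, 0, 0, 0, 1, 1, 0, 0, 0, 0, 0, 0], [0, 0, 0, 0, 0, 0, 0, 0, 0, 0, 0, 0, 0, 0, 0, 0, -1, 1, 0, 0, 0, 0, 0, 0]]

def GzL : List (List Int) := [[2, -1, -1, 0, 0, 0, 0, 0, 0, 0, 0, 0, 0, 0, 0, 0, 0, 0, 0, 0, 0, 0, 0, 0], [-1, 2, 0, 0, 0, 0, 0, 0, 0, 0, 0, 0, 0, 0, 0, 0, 0, 0, -1, 1, 1, 0, 0, -1], [-1, 0, 2, 0, 0, 0, 0, 0, 0, 0, 0, 0, 0, 0, 0, 0, 0, 0, 1, 0, 0, 1, 0, 1], [0, 0, 0, 2, -1, -1, 0, 0, 0, 0, 0, 0, 0, 0, 0, 0, 0, 0, 0, 0, 0, 0, 0, 0], [0, 0, 0, -1, 2, 0, 0, 0, 0, 0, 0, 0, 0, 0, 0, 0, 0, 0, 1, -1, -1, 0, 0, 0], [0, 0, 0, -1, 0, 2, 0, 0, 0, 0, 0, 0, 0, 0, 0,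 0, 0, 0, 0, 1, 1, 0, 0, 0], [0, 0, 0, 0, 0, 0, 2, -1, -1, 0, 0, 0, 0, 0, 0, 0, 0, 0, 0, 0, 0, 0, 0, 0], [0, 0, 0, 0, 0, 0, -1, 2, 0, 0, 0, 0, 0, 0, 0, 0, 0, 0, 1, -1, 1, 1, 1, 1], [0, 0, 0, 0, 0, 0, -1, 0, 2, 0, 0, 0, 0, 0, 0, 0, 0, 0, 0, 1, 0, 0, 0, 0], [0, 0, 0, 0, 0, 0, 0, 0, 0, 2, -1, 0, 0, 0, 0, 0, 0, 0, 0, 0, 0, 0, 0, 0], [0, 0, 0, 0, 0, 0, 0, 0, 0, -1, 2, -1, 0, 0, 0, 0, 0, 0, 0, 0, 0, 0, 0, 0], [0, 0, 0, 0, 0, 0, 0, 0, 0, 0, -1, 2, 0, 0, 0, 0, 0, 0, -1, 1, -1, -1, 1, 0], [0, 0, 0, 0, 0, 0, 0, 0, 0, 0, 0, 0, 2, -1, 0, 0, 0, 0, 0, 0, 0, 0, 0, 0], [0, 0, 0, 0, 0, 0, 0, 0, 0, 0, 0, 0, -1, 2, -1, 0, 0, 0, 0, 0, 0, 0, 0,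 0], [0, 0, 0, 0, 0, 0, 0, 0, 0, 0, 0, 0, 0, -1, 2, 0, 0, 0, 0, 0, 1, 0, 0, 1], [0, 0, 0, 0, 0, 0, 0, 0, 0, 0, 0, 0, 0, 0, 0, 2, -1, -1, 0, 0, 0, 0, 0, 0], [0, 0, 0, 0, 0, 0, 0, 0, 0, 0, 0, 0, 0, 0, 0, -1, 2, 0, -1, -1, 1, 0, 1, 0], [0, 0, 0, 0, 0, 0, 0, 0, 0, 0, 0, 0, 0, 0, 0, -1, 0, 2, 1, 1, 0, 1, 0, 0], [0, -1, 1, 0, 1, 0, 0, 1, 0, 0, 0, -1, 0, 0, 0, 0, -1, 1, 6, 0, 0, 3, 1, 2], [0, 1, 0, 0, -1, 1, 0, -1, 1, 0, 0, 1, 0, 0, 0, 0, -1, 1, 0, 6, 0, 0, 1, -1], [0, 1, 0, 0, -1, 1, 0, 1, 0, 0, 0, -1, 0, 0, 1, 0, 1, 0, 0, 0, 6, 3, 1, 2], [0, 0, 1, 0, 0, 0, 0, 1, 0, 0, 0, -1, 0, 0, 0, 0, 0, 1, 3, 0, 3, 4, 1, 2], [0, 0, 0, 0, 0, 0, 0,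 1, 0, 0, 0, 1, 0, 0, 0, 0, 1, 0, 1, 1, 1, 1, 4, 1], [0, -1, 1, 0, 0, 0, 0, 1, 0, 0, 0, 0, 0, 0, 1, 0, 0, 0, 2, -1, 2, 2, 1, 4]]

def GiL : List (List Int) := [[2, -1, 4, 0, 2, -2, 0, 0, 0, -1, -2, -3, -1, -2, -3, 0, -3, 3, 0, 0, 4, -6, 2, 0], [-1, 318, -320, 8, -285, 301, -12, -64, 40, 71, 142, 213, 111, 222, 333, 9, 258, -240, -16, -92, -502, 597, -113, 58], [4, -320, 328, -8, 289, -305, 12, 64, -40, -73, -146, -219, -113, -226, -339, -9, -264, 246, 16, 92, 510, -609, 117, -58], [0, 8, -8, 2, -6, 9, 0, -1, 1, 1, 2, 3, 3, 6, 9, 0, 6, -6, -2, -2, -14, 16, -2, 2], [2, -285, 289, -6, 258, -270, 11, 58, -36, -65, -130, -195, -100, -200, -300, -8, -233, 217, 13, 83, 451, -538, 103, -51], [-2, 301, -305, 9, -270, 288, -11, -60, 38, 67, 134, 201, 106, 212, 318, 8, 245, -229, -17, -87, -479, 570, -107, 55], [0, -12, 12, 0, 11, -11, 2, 4, -1, -3,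 -6, -9, -4, -8, -12, 0, -9, 9, 0, 4, 18, -22, 4, -2], [0, -64, 64, -1, 58, -60, 4, 16, -8, -15, -30, -45, -22, -44, -66, -1, -50, 48, 2, 20, 99, -119, 22, -11], [0, 40, -40, 1, -36, 38, -1, -8, 6, 9, 18, 27, 14, 28, 42, 1, 32, -30, -2, -12, -63, 75, -14, 7], [-1, 71, -73, 1, -65, 67, -3, -15, 9, 18, 35, 52, 25, 50, 75, 2, 59, -55, -2, -21, -112, 135, -27, 12], [-2, 142, -146, 2, -130, 134, -6, -30, 18, 35, 70, 104, 50, 100, 150, 4, 118, -110, -4, -42, -224, 270, -54, 24], [-3, 213, -219, 3, -195, 201, -9, -45, 27, 52, 104, 156, 75, 150, 225, 6, 177, -165, -6, -63, -336, 405, -81, 36], [-1, 111, -113, 3, -100, 106, -4, -22, 14, 25, 50, 75, 40, 79, 118, 3, 91, -85, -6, -32, -177, 211, -40, 20], [-2, 222, -226, 6, -200, 212, -8, -44, 28, 50, 100, 150, 79, 158, 236, 6, 182, -170, -12, -64, -354, 422, -80, 40], [-3, 333, -339, 9, -300, 318, -12, -66, 42, 75, 150, 225, 118, 236, 354, 9,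 273, -255, -18, -96, -531, 633, -120, 60], [0, 9, -9, 0, -8, 8, 0, -1, 1, 2, 4, 6, 3, 6, 9, 2, 9, -6, 0, -2, -14, 16, -4, 2], [-3, 258, -264, 6, -233, 245, -9, -50, 32, 59, 118, 177, 91, 182, 273, 9, 216, -198, -12, -73, -411, 490, -96, 47], [3, -240, 246, -6, 217, -229, 9, 48, -30, -55, -110, -165, -85, -170, -255, -6, -198, 186, 12, 69, 383, -458, 88, -43], [0, -16, 16, -2, 13, -17, 0, 2, -2, -2, -4, -6, -6, -12, -18, 0, -12, 12, 4, 4, 28, -32, 4, -4], [0, -92, 92, -2, 83, -87, 4, 20, -12, -21, -42, -63, -32, -64, -96, -2, -73, 69, 4, 28, 144, -172, 32, -16], [4, -502, 510, -14, 451, -479, 18, 99, -63, -112, -224, -336, -177, -354, -531, -14, -411, 383, 28, 144, 800, -952, 180, -92], [-6, 597, -609, 16, -538, 570, -22, -119, 75, 135, 270, 405, 211, 422, 633, 16, 490, -458, -32, -172, -952, 1136, -216, 108], [2, -113, 117, -2, 103, -107, 4, 22, -14, -27, -54, -81, -40, -80, -120, -4, -96, 88, 4, 32, 180, -216, 44,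 -20], [0, 58, -58, 2, -51, 55, -2, -11, 7, 12, 24, 36, 20, 40, 60, 2, 47, -43, -4, -16, -92, 108, -20, 12]]

def CL : List (List Int) := [[-2, 1, -4, 0, -2, 2, 0, 0, 0, 1, 2, 3, 1, 2, 3, 0, 3, -3, 0, 0, -4, 6, -2, 0], [1, 0, 0, 0, 0, 0, 0, 0, 0, 0, 0, 0, 0, 0, 0, 0, 0, 0, 0, 0, 0, 0, 0, 0], [0, 1, 0, 0, 0, 0, 0, 0, 0, 0, 0, 0, 0, 0, 0, 0, 0, 0, 0, 0, 0, 0, 0, 0], [0, 0, 1, 0, 0, 0, 0, 0, 0, 0, 0, 0, 0, 0, 0, 0, 0, 0, 0, 0, 0, 0, 0, 0], [0, -8, 8, -2, 6, -9, 0, 1, -1, -1, -2, -3, -3, -6, -9, 0, -6, 6, 2, 2, 14, -16, 2, -2], [0, 0, 0, 1, 0, 0, 0, 0, 0, 0, 0, 0, 0, 0, 0, 0, 0, 0, 0, 0, 0, 0, 0, 0], [0, 0, 0, 0, 1, 0, 0, 0, 0, 0, 0, 0, 0, 0, 0, 0, 0, 0, 0, 0, 0, 0, 0, 0], [0, 0,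 0, 0, 0, 1, 0, 0, 0, 0, 0, 0, 0, 0, 0, 0, 0, 0, 0, 0, 0, 0, 0, 0], [0, 12, -12, 0, -11, 11, -2, -4, 1, 3, 6, 9, 4, 8, 12, 0, 9, -9, 0, -4, -18, 22, -4, 2], [0, 0, 0, 0, 0, 0, 1, 0, 0, 0, 0, 0, 0, 0, 0, 0, 0, 0, 0, 0, 0, 0, 0, 0], [0, 0, 0, 0, 0, 0, 0, 1, 0, 0, 0, 0, 0, 0, 0, 0, 0, 0, 0, 0, 0, 0, 0, 0], [0, 0, 0, 0, 0, 0, 0, 0, 1, 0, 0, 0, 0, 0, 0, 0, 0, 0, 0, 0, 0, 0, 0, 0], [0, 0, 0, 0, 0, 0, 0, 0, 0, 1, 0, 0, 0, 0, 0, 0, 0, 0, 0, 0, 0, 0, 0, 0], [0, 0, 0, 0, 0, 0, 0, 0, 0, 0, 1, 0, 0, 0, 0, 0, 0, 0, 0, 0, 0, 0, 0, 0], [0, 0, 0, 0, 0, 0, 0, 0, 0, 0, 0, 1, 0, 0, 0, 0, 0, 0, 0, 0, 0, 0, 0, 0], [0, -5, 5, 0, 5, -5, 0, 1, -1, -2,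 -4, -5, -2, -4, -6, 0, -4, 4, 0, 2, 8, -10, 2, 0], [0, 0, 0, 0, 0, 0, 0, 0, 0, 0, 0, 0, 1, 0, 0, 0, 0, 0, 0, 0, 0, 0, 0, 0], [0, 0, 0, 0, 0, 0, 0, 0, 0, 0, 0, 0, 0, 1, 0, 0, 0, 0, 0, 0, 0, 0, 0, 0], [0, 1, -1, 0, -1, 1, 0, 0, 0, 0, 0, 0, 0, 0, 1, 0, 1, -1, 0, 0, -2, 2, 0, 0], [0, 0, 0, 0, 0, 0, 0, 0, 0, 0, 0, 0, 0, 0, 1, 0, 0, 0, 0, 0, 0, 0, 0, 0], [0, -9, 9, 0, 8, -8, 0, 1, -1, -2, -4, -6, -3, -6, -9, -2, -9, 6, 0, 2, 14, -16, 4, -2], [0, 0, 0, 0, 0, 0, 0, 0, 0, 0, 0, 0, 0, 0, 0, 1, 0, 0, 0, 0, 0, 0, 0, 0], [0, 0, 0, 0, 0, 0, 0, 0, 0, 0, 0, 0, 0, 0, 0, 0, 1, 0, 0, 0, 0, 0, 0, 0], [0, 0, 0, 0, 0, 0, 0, 0, 0, 0, 0, 0, 0, 0, 0, 0, 0, 1,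 0, 0, 0, 0, 0, 0]]

def FbL : List (List Int) := [[1, -1, 0, 0], [0, 1, -1, 0], [0, 0, 1, -1], [0, 0, 1, 1]]

def Q2m (i j : Fin 24) : Int := ((Q2L.getD i.1 []).getD j.1 0)
def A2m (i j : Fin 24) : Int := ((A2L.getD i.1 []).getD j.1 0)
def Gm (i j : Fin 24) : Int := ((GzL.getD i.1 []).getD j.1 0)
def Gim (i j : Fin 24) : Int := ((GiL.getD i.1 []).getD j.1 0)
def Cm (j : Fin 6) (k : Fin 4) (i : Fin 24) : Int := ((CL.getD (4*j.1+k.1) []).getD i.1 0)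
def Fbm (k i : Fin 4) : Int := ((FbL.getD k.1 []).getD i.1 0)

def idx (p : Fin 6 × Fin 4) : Fin 24 := ⟨4 * p.1.1 + p.2.1, by omega⟩
def fvZ (j : Fin 6) (k : Fin 4) (q : Fin 24) : Int :=
  if q.1 / 4 = j.1 then Fbm k ⟨q.1 % 4, by omega⟩ else 0

abbrev s24 (f : Fin 24 → Int) : Int := ((List.finRange 24).map f).sum
abbrev s4 (f : Fin 4 → Int) : Int := ((List.finRange 4).map f).sum

lemma sum_univ_s24 (f : Fin 24 → Int) : ∑ i : Fin 24, f i = s24 f := Fin.sum_univ_def f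
lemma sum_univ_s4 (f : Fin 4 → Int) : ∑ i : Fin 4, f i = s4 f := Fin.sum_univ_def f

set_option maxHeartbeats 4000000

theorem dAQ : ∀ p q : Fin 24, s24 (fun i => A2m p i * Q2m i q) = if p = q then 4 else 0 := by decide
theorem dQA : ∀ i j : Fin 24, s24 (fun p => Q2m i p * A2m p j) = if i = j then 4 else 0 := by decide
theorem dG : ∀ i j : Fin 24, s24 (fun p => Q2m i p * Q2m j p) = 4 * Gm i j := by decide
theorem dGiG : ∀ k i : Fin 24, s24 (fun j => Gim k j * Gm i j) = if k = i then 1 else 0 := by decide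
theorem dC : ∀ (j : Fin 6) (k : Fin 4) (q : Fin 24),
    s24 (fun i => Cm j k i * Q2m i q) = 2 * fvZ j k q := by decide
theorem dQev : ∀ i : Fin 24, i.1 < 18 → ∀ q, Q2m i q % 2 = 0 := by decide
theorem dQblk : ∀ i : Fin 24, i.1 < 18 → ∀ j : Fin 6,
    (s4 fun k => Q2m i (idx (j, k))) % 4 = 0 := by decide
theorem dGdiag : ∀ i : Fin 24, Gm i i % 2 = 0 := by decide
theorem didx1 : ∀ (p : Fin 6 × Fin 4) (j : Fin 6), ((idx p).1 / 4 = j.1) ↔ p.1 = j := by decide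
theorem didx2 : ∀ p : Fin 6 × Fin 4, (idx p).1 % 4 = p.2.1 := by decide

def eqv : Fin 24 ≃ Fin 6 × Fin 4 where
  toFun q := (⟨q.1 / 4, by omega⟩, ⟨q.1 % 4, by omega⟩)
  invFun := idx
  left_inv := by decide
  right_inv := by decide

lemma idx_eqv (q : Fin 24) : idx (eqv q) = q := eqv.left_inv q
lemma eqv_idx (p : Fin 6 × Fin 4) : eqv (idx p) = p := eqv.right_inv p

lemma sum24 {M : Type*} [AddCommMonoid M] (f : Fin 6 × Fin 4 → M) :
    ∑ p : Fin 6 × Fin 4, f p = ∑ q : Fin 24, f (eqv q) := (Equiv.sum_comp eqv f).symm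

noncomputable def bv : Fin 24 → (Fin 6 × Fin 4 → ℝ) := fun i p => (Q2m i (idx p) : ℝ) / 2

lemma bv_eqv (i q : Fin 24) : bv i (eqv q) = (Q2m i q : ℝ) / 2 := by rw [bv, idx_eqv]

def Lspan : Submodule ℤ (Fin 6 × Fin 4 → ℝ) := Submodule.span ℤ (Set.range bv)

lemma bv_mem_L (i : Fin 24) : bv i ∈ Lspan := Submodule.subset_span ⟨i, rfl⟩

/-- Gram matrix identity for the basis vectors. -/
lemma bv_pair (i j : Fin 24) : ∑ p : Fin 6 × Fin 4, bv i p * bv j p = (Gm i j : ℝ) := by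
  rw [sum24]
  calc ∑ q : Fin 24, bv i (eqv q) * bv j (eqv q)
      = ∑ q : Fin 24, ((Q2m i q * Q2m j q : ℤ) : ℝ)/4 :=
        Finset.sum_congr rfl fun q _ => by rw [bv_eqv, bv_eqv]; push_cast; ring
    _ = ((∑ q : Fin 24, Q2m i q * Q2m j q : ℤ) : ℝ)/4 := by
        rw [Int.cast_sum, Finset.sum_div]
    _ = ((4 * Gm i j : ℤ) : ℝ)/4 := by rw [sum_univ_s24, dG]
    _ = (Gm i j : ℝ) := by push_cast; ring

/-- Symmetry of the pairing. -/
lemma pr_sym (x y : Fin 6 × Fin 4 → ℝ) :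
    ∑ p : Fin 6 × Fin 4, x p * y p = ∑ p : Fin 6 × Fin 4, y p * x p :=
  Finset.sum_congr rfl fun p _ => mul_comm _ _

lemma pr_addl (x y z : Fin 6 × Fin 4 → ℝ) :
    ∑ p : Fin 6 × Fin 4, (x + y) p * z p
      = ∑ p : Fin 6 × Fin 4, x p * z p + ∑ p : Fin 6 × Fin 4, y p * z p := by
  rw [← Finset.sum_add_distrib]
  exact Finset.sum_congr rfl fun p _ => by simp [add_mul]

lemma pr_smull (c : ℤ) (x z : Fin 6 × Fin 4 → ℝ) :
    ∑ p : Fin 6 × Fin 4, (c • x) p * z p = (c : ℝ) * ∑ p : Fin 6 × Fin 4, x p * z p := by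
  rw [Finset.mul_sum]
  exact Finset.sum_congr rfl fun p _ => by simp [Pi.smul_apply]; ring

/-- Integrality of the pairing on the lattice. -/
lemma pair_int : ∀ x ∈ Lspan, ∀ y ∈ Lspan,
    ∃ m : ℤ, ∑ p : Fin 6 × Fin 4, x p * y p = (m : ℝ) := by
  intro x hx
  induction hx using Submodule.span_induction with
  | mem x hxs =>
    obtain ⟨i, rfl⟩ := hxs
    intro y hy
    induction hy using Submodule.span_induction with
    | mem y hys => obtain ⟨j, rfl⟩ := hys; exact ⟨Gm i j, bv_pair i j⟩
    | zero => exact ⟨0, by simp⟩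
    | add y z _ _ ihy ihz =>
      obtain ⟨my, hy⟩ := ihy; obtain ⟨mz, hz⟩ := ihz
      refine ⟨my + mz, ?_⟩
      rw [pr_sym, pr_addl, pr_sym y, pr_sym z, hy, hz]; push_cast; ring
    | smul c y _ ihy =>
      obtain ⟨my, hy⟩ := ihy
      refine ⟨c * my, ?_⟩
      rw [pr_sym, pr_smull, pr_sym y, hy]; push_cast; ring
  | zero => intro y _; exact ⟨0, by simp⟩
  | add x z _ _ ihx ihz =>
    intro y hy
    obtain ⟨mx, h1⟩ := ihx y hy; obtain ⟨mz, h2⟩ := ihz y hy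
    refine ⟨mx + mz, ?_⟩
    rw [pr_addl, h1, h2]; push_cast; ring
  | smul c x _ ihx =>
    intro y hy
    obtain ⟨mx, h1⟩ := ihx y hy
    refine ⟨c * mx, ?_⟩
    rw [pr_smull, h1]; push_cast; ring

lemma sum_sq_add (x y : Fin 6 × Fin 4 → ℝ) :
    ∑ p : Fin 6 × Fin 4, (x + y) p * (x + y) p
      = (∑ p : Fin 6 × Fin 4, x p * x p) + (∑ p : Fin 6 × Fin 4, y p * y p)
        + 2 * ∑ p : Fin 6 × Fin 4, x p * y p := by
  rw [Finset.mul_sum, ← Finset.sum_add_distrib, ← Finset.sum_add_distrib]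
  exact Finset.sum_congr rfl fun p _ => by simp [Pi.add_apply]; ring

/-- Evenness on the lattice. -/
lemma even_mem : ∀ x ∈ Lspan, ∃ m : ℤ, ∑ p : Fin 6 × Fin 4, x p * x p = 2 * (m : ℝ) := by
  intro x hx
  induction hx using Submodule.span_induction with
  | mem x hxs =>
    obtain ⟨i, rfl⟩ := hxs
    obtain ⟨w, hw⟩ := Int.dvd_of_emod_eq_zero (dGdiag i)
    refine ⟨w, ?_⟩
    rw [bv_pair, hw]; push_cast; ring
  | zero => exact ⟨0, by simp⟩
  | add x y hx hy ihx ihy =>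
    obtain ⟨mx, hmx⟩ := ihx; obtain ⟨my, hmy⟩ := ihy
    obtain ⟨mxy, hmxy⟩ := pair_int x hx y hy
    refine ⟨mx + my + mxy, ?_⟩
    rw [sum_sq_add, hmx, hmy, hmxy]; push_cast; ring
  | smul c x _ ihx =>
    obtain ⟨mx, hmx⟩ := ihx
    refine ⟨c * c * mx, ?_⟩
    have h1 : ∑ p : Fin 6 × Fin 4, (c • x) p * (c • x) p
        = (c : ℝ) * ((c : ℝ) * ∑ p : Fin 6 × Fin 4, x p * x p) := by
      rw [Finset.mul_sum, Finset.mul_sum]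
      exact Finset.sum_congr rfl fun p _ => by simp [Pi.smul_apply]; ring
    rw [h1, hmx]; push_cast; ring

noncomputable def fv (j : Fin 6) (k : Fin 4) : Fin 6 × Fin 4 → ℝ :=
  fun p => if p.1 = j then (Fbm k p.2 : ℝ) else 0

lemma fv_comb (j : Fin 6) (k : Fin 4) : fv j k = ∑ i : Fin 24, Cm j k i • bv i := by
  funext p
  rw [Finset.sum_apply]
  have step : ∑ i : Fin 24, (Cm j k i • bv i) p = ((2 * fvZ j k (idx p) : ℤ) : ℝ)/2 := by
    calc ∑ i : Fin 24, (Cm j k i • bv i) p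
        = ∑ i : Fin 24, ((Cm j k i * Q2m i (idx p) : ℤ) : ℝ)/2 :=
          Finset.sum_congr rfl fun i _ => by
            simp only [Pi.smul_apply, bv, zsmul_eq_mul]; push_cast; ring
      _ = ((∑ i : Fin 24, Cm j k i * Q2m i (idx p) : ℤ) : ℝ)/2 := by
          rw [Int.cast_sum, Finset.sum_div]
      _ = ((2 * fvZ j k (idx p) : ℤ) : ℝ)/2 := by rw [sum_univ_s24, dC j k (idx p)]
  rw [step, fv, fvZ]
  rcases eq_or_ne p.1 j with h | h
  · rw [if_pos h, if_pos ((didx1 p j).2 h)]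
    have h2 : (⟨(idx p).1 % 4, by omega⟩ : Fin 4) = p.2 := Fin.ext (didx2 p)
    rw [h2]; push_cast; ring
  · rw [if_neg h, if_neg (fun hc => h ((didx1 p j).1 hc))]; norm_num

lemma fv_mem (j : Fin 6) (k : Fin 4) : fv j k ∈ Lspan := by
  rw [fv_comb]
  exact Submodule.sum_mem _ fun i _ => Submodule.smul_mem _ _ (bv_mem_L i)

lemma sp_mem (x : Fin 6 × Fin 4 → ℝ) (h1 : ∀ p, ∃ m : ℤ, x p = (m : ℝ))
    (h2 : ∀ j : Fin 6, ∃ m : ℤ, ∑ i : Fin 4, x (j, i) = 2 * (m : ℝ)) : x ∈ Lspan := by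
  choose a ha using h1
  choose mm hmm using h2
  have hx : x = ∑ j : Fin 6,
      ((a (j,0)) • fv j 0 + (a (j,0) + a (j,1)) • fv j 1 +
       (a (j,0) + a (j,1) + a (j,2) - mm j) • fv j 2 + (mm j) • fv j 3) := by
    funext p
    obtain ⟨J, K⟩ := p
    rw [Finset.sum_apply]
    rw [Finset.sum_eq_single J (fun j _ hne => by
      simp [fv, Ne.symm hne]) (fun hJ => absurd (Finset.mem_univ J) hJ)]
    have hs : (a (J,0) : ℝ) + a (J,1) + a (J,2) + a (J,3) = 2 * mm J := by
      have h4 := hmm J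
      rw [Fin.sum_univ_four, ha (J,0), ha (J,1), ha (J,2), ha (J,3)] at h4
      exact h4
    simp only [Pi.add_apply, Pi.smul_apply, zsmul_eq_mul]
    fin_cases K <;>
      (rw [ha];
       norm_num [fv, Fbm, FbL, List.getD, show ((0:Fin 4):ℕ) = 0 from rfl,
         show ((1:Fin 4):ℕ) = 1 from rfl, show ((2:Fin 4):ℕ) = 2 from rfl,
         show ((3:Fin 4):ℕ) = 3 from rfl]) <;>
      (push_cast; linarith [hs])
  rw [hx]
  exact Submodule.sum_mem _ fun j _ =>
    add_mem (add_mem (add_mem (Submodule.smul_mem _ _ (fv_mem j 0))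
      (Submodule.smul_mem _ _ (fv_mem j 1))) (Submodule.smul_mem _ _ (fv_mem j 2)))
      (Submodule.smul_mem _ _ (fv_mem j 3))

lemma hg0 : bv ⟨18, by omega⟩ = fun p : Fin 6 × Fin 4 => ![vD4, cD4, cD4, vD4, cD4, vD4] p.1 p.2 := by
  funext p; obtain ⟨j, k⟩ := p
  fin_cases j <;> fin_cases k <;> norm_num [bv, Q2m, Q2L, idx, sD4, vD4, cD4, List.getD]
lemma hg1 : bv ⟨19, by omega⟩ = fun p : Fin 6 × Fin 4 => ![cD4, vD4, vD4, cD4, cD4, vD4] p.1 p.2 := by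
  funext p; obtain ⟨j, k⟩ := p
  fin_cases j <;> fin_cases k <;> norm_num [bv, Q2m, Q2L, idx, sD4, vD4, cD4, List.getD]
lemma hg2 : bv ⟨20, by omega⟩ = fun p : Fin 6 × Fin 4 => ![cD4, vD4, cD4, vD4, vD4, cD4] p.1 p.2 := by
  funext p; obtain ⟨j, k⟩ := p
  fin_cases j <;> fin_cases k <;> norm_num [bv, Q2m, Q2L, idx, sD4, vD4, cD4, List.getD]
lemma hg3 : bv ⟨21, by omega⟩ = fun p : Fin 6 × Fin 4 => ![sD4, 0, cD4, vD4, 0, sD4] p.1 p.2 := by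
  funext p; obtain ⟨j, k⟩ := p
  fin_cases j <;> fin_cases k <;> norm_num [bv, Q2m, Q2L, idx, sD4, vD4, cD4, List.getD]
lemma hg4 : bv ⟨22, by omega⟩ = fun p : Fin 6 × Fin 4 => ![0, 0, cD4, cD4, cD4, cD4] p.1 p.2 := by
  funext p; obtain ⟨j, k⟩ := p
  fin_cases j <;> fin_cases k <;> norm_num [bv, Q2m, Q2L, idx, sD4, vD4, cD4, List.getD]
lemma hg5 : bv ⟨23, by omega⟩ = fun p : Fin 6 × Fin 4 => ![vD4, 0, cD4, sD4, vD4, 0] p.1 p.2 := by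
  funext p; obtain ⟨j, k⟩ := p
  fin_cases j <;> fin_cases k <;> norm_num [bv, Q2m, Q2L, idx, sD4, vD4, cD4, List.getD]

lemma ND4_le_L : ND4 ≤ Lspan := by
  rw [ND4]
  apply Submodule.span_le.2
  rintro x (hx | hx)
  · exact sp_mem x hx.1 hx.2
  · simp only [Set.mem_insert_iff, Set.mem_singleton_iff] at hx
    rcases hx with h|h|h|h|h|h <;> subst h
    · exact hg0 ▸ bv_mem_L _
    · exact hg1 ▸ bv_mem_L _
    · exact hg2 ▸ bv_mem_L _
    · exact hg3 ▸ bv_mem_L _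
    · exact hg4 ▸ bv_mem_L _
    · exact hg5 ▸ bv_mem_L _

lemma L_le_ND4 : Lspan ≤ ND4 := by
  apply Submodule.span_le.2
  rintro _ ⟨i, rfl⟩
  by_cases hi : i.1 < 18
  · apply Submodule.subset_span
    left
    constructor
    · intro p
      obtain ⟨w, hw⟩ := Int.dvd_of_emod_eq_zero (dQev i hi (idx p))
      exact ⟨w, by rw [bv, hw]; push_cast; ring⟩
    · intro j
      obtain ⟨w, hw⟩ := Int.dvd_of_emod_eq_zero (dQblk i hi j)
      refine ⟨w, ?_⟩
      have h1 : ∑ k : Fin 4, bv i (j, k)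
          = (((s4 fun k => Q2m i (idx (j, k))) : ℤ) : ℝ) / 2 := by
        rw [← sum_univ_s4, Int.cast_sum, Finset.sum_div]
        exact Finset.sum_congr rfl fun k _ => by rw [bv]
      rw [h1, hw]; push_cast; ring
  · rcases i with ⟨iv, hlt⟩
    simp only [not_lt] at hi
    interval_cases iv
    · exact hg0 ▸ Submodule.subset_span (Or.inr (by left; rfl))
    · exact hg1 ▸ Submodule.subset_span (Or.inr (by right; left; rfl))
    · exact hg2 ▸ Submodule.subset_span (Or.inr (by right; right; left; rfl))
    · exact hg3 ▸ Submodule.subset_span (Or.inr (by right; right; right; left; rfl))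
    · exact hg4 ▸ Submodule.subset_span (Or.inr (by right; right; right; right; left; rfl))
    · exact hg5 ▸ Submodule.subset_span (Or.inr (by right; right; right; right; right; rfl))

lemma L_eq_ND4 : Lspan = ND4 := le_antisymm L_le_ND4 ND4_le_L

lemma dual_mem (y : Fin 6 × Fin 4 → ℝ)
    (h : ∀ i : Fin 24, ∃ m : ℤ, ∑ p : Fin 6 × Fin 4, y p * bv i p = (m : ℝ)) :
    y ∈ Lspan := by
  choose m hm using h
  set t : Fin 24 → ℝ := fun i => ∑ q : Fin 24, y (eqv q) * ((A2m q i : ℝ) / 2) with ht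
  have hrep : ∀ p : Fin 6 × Fin 4, y p = ∑ i : Fin 24, t i * bv i p := by
    intro p
    have step : ∑ i : Fin 24, t i * bv i p
        = ∑ q : Fin 24, y (eqv q) * ((((if q = idx p then (4:ℤ) else 0) : ℤ) : ℝ) / 4) := by
      rw [ht]
      calc ∑ i : Fin 24, (∑ q : Fin 24, y (eqv q) * ((A2m q i : ℝ)/2)) * bv i p
          = ∑ i : Fin 24, ∑ q : Fin 24, y (eqv q) * (((A2m q i * Q2m i (idx p) : ℤ) : ℝ)/4) := by
            refine Finset.sum_congr rfl fun i _ => ?_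
            rw [Finset.sum_mul]
            refine Finset.sum_congr rfl fun q _ => ?_
            rw [bv]
            push_cast; ring
        _ = ∑ q : Fin 24, ∑ i : Fin 24, y (eqv q) * (((A2m q i * Q2m i (idx p) : ℤ) : ℝ)/4) :=
            Finset.sum_comm
        _ = ∑ q : Fin 24, y (eqv q) * ((((if q = idx p then (4:ℤ) else 0) : ℤ) : ℝ) / 4) := by
            refine Finset.sum_congr rfl fun q _ => ?_
            rw [← dAQ q (idx p), ← sum_univ_s24, Int.cast_sum, Finset.sum_div, Finset.mul_sum]
    rw [step, Finset.sum_eq_single (idx p) (fun q _ hq => by rw [if_neg hq]; norm_num)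
      (fun hq => absurd (Finset.mem_univ _) hq)]
    rw [if_pos rfl, eqv_idx]
    norm_num
  have hmG : ∀ j : Fin 24, (m j : ℝ) = ∑ i : Fin 24, t i * (Gm i j : ℝ) := by
    intro j
    rw [← hm j]
    calc ∑ p : Fin 6 × Fin 4, y p * bv j p
        = ∑ p : Fin 6 × Fin 4, ∑ i : Fin 24, t i * (bv i p * bv j p) := by
          refine Finset.sum_congr rfl fun p _ => ?_
          rw [hrep p, Finset.sum_mul]
          exact Finset.sum_congr rfl fun i _ => by ring
      _ = ∑ i : Fin 24, ∑ p : Fin 6 × Fin 4, t i * (bv i p * bv j p) := Finset.sum_comm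
      _ = ∑ i : Fin 24, t i * (Gm i j : ℝ) := by
          refine Finset.sum_congr rfl fun i _ => ?_
          rw [← Finset.mul_sum, bv_pair]
  have htk : ∀ k : Fin 24, t k = ((∑ j : Fin 24, Gim k j * m j : ℤ) : ℝ) := by
    intro k
    have main : ∑ j : Fin 24, (Gim k j : ℝ) * (m j : ℝ) = t k := by
      calc ∑ j : Fin 24, (Gim k j : ℝ) * (m j : ℝ)
          = ∑ j : Fin 24, ∑ i : Fin 24, t i * ((Gim k j * Gm i j : ℤ) : ℝ) := by
            refine Finset.sum_congr rfl fun j _ => ?_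
            rw [hmG j, Finset.mul_sum]
            refine Finset.sum_congr rfl fun i _ => by push_cast; ring
        _ = ∑ i : Fin 24, ∑ j : Fin 24, t i * ((Gim k j * Gm i j : ℤ) : ℝ) := Finset.sum_comm
        _ = ∑ i : Fin 24, t i * (((if k = i then (1:ℤ) else 0) : ℤ) : ℝ) := by
            refine Finset.sum_congr rfl fun i _ => ?_
            rw [← Finset.mul_sum, ← Int.cast_sum, sum_univ_s24, dGiG k i]
        _ = t k := by
            rw [Finset.sum_eq_single k (fun i _ hi => by rw [if_neg (Ne.symm hi)]; norm_num)
              (fun hk => absurd (Finset.mem_univ _) hk), if_pos rfl]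
            norm_num
    rw [Int.cast_sum]
    push_cast
    push_cast at main
    exact main.symm
  have hy : y = ∑ k : Fin 24, (∑ j : Fin 24, Gim k j * m j) • bv k := by
    funext p
    rw [Finset.sum_apply, hrep p]
    refine Finset.sum_congr rfl fun k _ => ?_
    rw [Pi.smul_apply, zsmul_eq_mul, htk k]
  rw [hy]
  exact Submodule.sum_mem _ fun k _ => Submodule.smul_mem _ _ (bv_mem_L k)

lemma bv_li : LinearIndependent ℤ bv := by
  rw [Fintype.linearIndependent_iff]
  intro c hc k
  have hp : ∀ q : Fin 24, ∑ i : Fin 24, (c i : ℝ) * (Q2m i q : ℝ) = 0 := by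
    intro q
    have h0 := congrFun hc (eqv q)
    rw [Finset.sum_apply, Pi.zero_apply] at h0
    have h1 : ∑ i : Fin 24, (c i : ℝ) * ((Q2m i q : ℝ)/2) = 0 := by
      rw [← h0]
      exact (Finset.sum_congr rfl fun i _ => by rw [Pi.smul_apply, bv_eqv, zsmul_eq_mul]).symm
    have h2 : ∑ i : Fin 24, (c i : ℝ) * (Q2m i q : ℝ)
        = 2 * ∑ i : Fin 24, (c i : ℝ) * ((Q2m i q : ℝ)/2) := by
      rw [Finset.mul_sum]; exact Finset.sum_congr rfl fun i _ => by ring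
    rw [h2, h1, mul_zero]
  have h4 : (c k : ℝ) * 4 = 0 := by
    have main : ∑ q : Fin 24, (∑ i : Fin 24, (c i : ℝ) * (Q2m i q : ℝ)) * (A2m q k : ℝ)
        = (c k : ℝ) * 4 := by
      calc ∑ q : Fin 24, (∑ i : Fin 24, (c i : ℝ) * (Q2m i q : ℝ)) * (A2m q k : ℝ)
          = ∑ q : Fin 24, ∑ i : Fin 24, (c i : ℝ) * ((Q2m i q * A2m q k : ℤ) : ℝ) := by
            refine Finset.sum_congr rfl fun q _ => ?_
            rw [Finset.sum_mul]
            exact Finset.sum_congr rfl fun i _ => by push_cast; ring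
        _ = ∑ i : Fin 24, ∑ q : Fin 24, (c i : ℝ) * ((Q2m i q * A2m q k : ℤ) : ℝ) :=
            Finset.sum_comm
        _ = ∑ i : Fin 24, (c i : ℝ) * (((if i = k then (4:ℤ) else 0) : ℤ) : ℝ) := by
            refine Finset.sum_congr rfl fun i _ => ?_
            rw [← Finset.mul_sum, ← Int.cast_sum, sum_univ_s24, dQA i k]
        _ = (c k : ℝ) * 4 := by
            rw [Finset.sum_eq_single k (fun i _ hi => by rw [if_neg hi]; norm_num)
              (fun hk => absurd (Finset.mem_univ _) hk), if_pos rfl]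
            norm_num
    rw [← main]
    exact Finset.sum_eq_zero fun q _ => by rw [hp q, zero_mul]
  have h5 : (c k : ℝ) = 0 := by linarith
  exact_mod_cast h5

lemma finrank_L : Module.finrank ℤ Lspan = 24 := by
  have b : Module.Basis (Fin 24) ℤ (Submodule.span ℤ (Set.range bv)) := Module.Basis.span bv_li
  rw [show Lspan = Submodule.span ℤ (Set.range bv) from rfl, Module.finrank_eq_card_basis b]
  simp

/-- `N(D₄⁶)` is an even unimodular lattice of rank 24 with respect to the standard
inner product on `ℝ²⁴`. -/
theorem stmt13 :
    -- even
    (∀ x ∈ ND4, ∃ m : ℤ, ∑ p : Fin 6 × Fin 4, x p * x p = 2 * (m : ℝ)) ∧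
    -- unimodular: the lattice equals its dual
    (∀ y : Fin 6 × Fin 4 → ℝ,
      (∀ x ∈ ND4, ∃ m : ℤ, ∑ p : Fin 6 × Fin 4, y p * x p = (m : ℝ)) ↔ y ∈ ND4) ∧
    -- rank 24
    Module.finrank ℤ ND4 = 24 := by
  refine ⟨?_, ?_, ?_⟩
  · intro x hx
    rw [← L_eq_ND4] at hx
    exact even_mem x hx
  · intro y
    constructor
    · intro h
      rw [← L_eq_ND4]
      exact dual_mem y fun i => h (bv i) (L_eq_ND4 ▸ bv_mem_L i)
    · intro hy x hx
      rw [← L_eq_ND4] at hy hx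
      exact pair_int y hy x hx
  · rw [← L_eq_ND4]
    exact finrank_L
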